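/- Let S be a commutative semiring and H a Hopf S-semialgebra. Then H admits a total left integral (t ∈ Hom_S(H,S) with Σ h_1·t(h_2) = t(h)·1_H for all h ∈ H and t(1_H) = 1_S) if and only if H is coseparable, i.e., there exists an S-linear map δ : H ⊗_S H → S such that δ(Δ(h)) = ε(h) for all h ∈ H, and Σ h_1·δ(h_2 ⊗ k) = Σ δ(h ⊗ k_1)·k_2 for all h, k ∈ H. -/

import Mathlib

/-!
STATEMENT 12: Let `S` be a commutative semiring and `H` a Hopf
`S`-semialgebra.  Then `H` admits a total left integral (`t : Hom_S(H,S)` with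
`Σ h₁ · t h₂ = t h • 1` for all `h` and `t 1 = 1`) if and only if `H` is
coseparable, i.e. there is an `S`-linear map `δ : H ⊗[S] H → S` with
`δ (Δ h) = ε h` for all `h`, and `Σ h₁ · δ(h₂ ⊗ k) = Σ δ(h ⊗ k₁) · k₂`
for all `h k : H`.
-/

open TensorProduct



open TensorProduct Coalgebra LinearMap

suppress_compilation

namespace Cosep12

variable {S : Type*} [CommSemiring S] {H : Type*} [Semiring H] [HopfAlgebra S H]

/-- `Φ (h ⊗ k) = Σ h k₁ ⊗ k₂`. -/
def Phi : H ⊗[S] H →ₗ[S] H ⊗[S] H :=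
  rTensor H (LinearMap.mul' S H) ∘ₗ (TensorProduct.assoc S H H H).symm.toLinearMap
    ∘ₗ lTensor H comul

/-- `Ψ (h ⊗ k) = Σ h 𝔞(k₁) ⊗ k₂`. -/
def Psi : H ⊗[S] H →ₗ[S] H ⊗[S] H :=
  rTensor H (LinearMap.mul' S H ∘ₗ lTensor H (HopfAlgebra.antipode (R := S)))
    ∘ₗ (TensorProduct.assoc S H H H).symm.toLinearMap ∘ₗ lTensor H comul

/-- `F δ (h ⊗ k) = Σ δ(h₂ ⊗ k) • h₁`. -/
def Fm (δ : H ⊗[S] H →ₗ[S] S) : H ⊗[S] H →ₗ[S] H :=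
  (TensorProduct.rid S H).toLinearMap ∘ₗ lTensor H δ
    ∘ₗ (TensorProduct.assoc S H H H).toLinearMap ∘ₗ rTensor H comul

/-- `G δ (h ⊗ k) = Σ δ(h ⊗ k₁) • k₂`. -/
def Gm (δ : H ⊗[S] H →ₗ[S] S) : H ⊗[S] H →ₗ[S] H :=
  (TensorProduct.lid S H).toLinearMap ∘ₗ rTensor H δ
    ∘ₗ (TensorProduct.assoc S H H H).symm.toLinearMap ∘ₗ lTensor H comul

lemma Fm_tmul (δ : H ⊗[S] H →ₗ[S] S) (h k : H) :
    Fm δ (h ⊗ₜ k) =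
      (TensorProduct.rid S H)
        (lTensor H (δ ∘ₗ (TensorProduct.mk S H H).flip k) (comul h)) := by
  simp only [Fm, coe_comp, Function.comp_apply, LinearEquiv.coe_coe, rTensor_tmul]
  induction (comul (R := S) h) using TensorProduct.induction_on with
  | zero => simp
  | tmul x y => simp
  | add x y hx hy => simp [tmul_add, add_tmul, hx, hy]

lemma Gm_tmul (δ : H ⊗[S] H →ₗ[S] S) (h k : H) :
    Gm δ (h ⊗ₜ k) =
      (TensorProduct.lid S H)
        (rTensor H (δ ∘ₗ TensorProduct.mk S H H h) (comul k)) := by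
  simp only [Gm, coe_comp, Function.comp_apply, LinearEquiv.coe_coe, lTensor_tmul]
  induction (comul (R := S) k) using TensorProduct.induction_on with
  | zero => simp
  | tmul x y => simp
  | add x y hx hy => simp [tmul_add, add_tmul, hx, hy]

end Cosep12

namespace Cosep12
variable {S : Type*} [CommSemiring S] {H : Type*} [Semiring H] [HopfAlgebra S H]

lemma Phi_tmul (h k : H) {ι : Type*} (s : Repr S k ι) :
    Phi (h ⊗ₜ[S] k) = ∑ j ∈ s.index, (h * s.left j) ⊗ₜ[S] s.right j := by
  simp only [Phi, coe_comp, Function.comp_apply, LinearEquiv.coe_coe, lTensor_tmul, ← s.eq,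
    tmul_sum, map_sum, assoc_symm_tmul, rTensor_tmul, mul'_apply]

lemma Psi_tmul (h k : H) {ι : Type*} (s : Repr S k ι) :
    Psi (h ⊗ₜ[S] k) =
      ∑ j ∈ s.index, (h * HopfAlgebra.antipode (R := S) (s.left j)) ⊗ₜ[S] s.right j := by
  simp only [Psi, coe_comp, Function.comp_apply, LinearEquiv.coe_coe, lTensor_tmul, ← s.eq,
    tmul_sum, map_sum, assoc_symm_tmul, rTensor_tmul, mul'_apply]

lemma Gm_tmul_sum (δ : H ⊗[S] H →ₗ[S] S) (x y : H) {ι : Type*} (s : Repr S y ι) :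
    Gm δ (x ⊗ₜ[S] y) = ∑ j ∈ s.index, δ (x ⊗ₜ[S] s.left j) • s.right j := by
  simp only [Gm, coe_comp, Function.comp_apply, LinearEquiv.coe_coe, lTensor_tmul, ← s.eq,
    tmul_sum, map_sum, assoc_symm_tmul, rTensor_tmul, lid_tmul]

end Cosep12

namespace Cosep12
variable {S : Type*} [CommSemiring S] {H : Type*} [Semiring H] [HopfAlgebra S H]

lemma sum_counit_smul_right {k : H} {ι : Type*} (s : Repr S k ι) :
    ∑ j ∈ s.index, counit (R := S) (s.left j) • s.right j = k := by
  have := congrArg (TensorProduct.lid S H) (sum_counit_tmul_eq s)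
  simp only [map_sum, lid_tmul, lid_tmul, one_smul] at this
  exact this

lemma sum_counit_smul_left {k : H} {ι : Type*} (s : Repr S k ι) :
    ∑ j ∈ s.index, counit (R := S) (s.right j) • s.left j = k := by
  have := congrArg (TensorProduct.rid S H) (sum_tmul_counit_eq s)
  simp only [map_sum, rid_tmul, one_smul] at this
  exact this

/-- `x ⊗ (y ⊗ z) ↦ g (x ⊗ y) ⊗ z`. -/
def trimap (g : H ⊗[S] H →ₗ[S] H) : H ⊗[S] (H ⊗[S] H) →ₗ[S] H ⊗[S] H :=
  rTensor H g ∘ₗ (TensorProduct.assoc S H H H).symm.toLinearMap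

@[simp] lemma trimap_tmul (g : H ⊗[S] H →ₗ[S] H) (x y z : H) :
    trimap g (x ⊗ₜ (y ⊗ₜ z)) = g (x ⊗ₜ y) ⊗ₜ z := by
  simp [trimap]

/-- `x ⊗ (y ⊗ z) ↦ g (x ⊗ y) • z`. -/
def trismul (g : H ⊗[S] H →ₗ[S] S) : H ⊗[S] (H ⊗[S] H) →ₗ[S] H :=
  (TensorProduct.lid S H).toLinearMap ∘ₗ rTensor H g
    ∘ₗ (TensorProduct.assoc S H H H).symm.toLinearMap

@[simp] lemma trismul_tmul (g : H ⊗[S] H →ₗ[S] S) (x y z : H) :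
    trismul g (x ⊗ₜ (y ⊗ₜ z)) = g (x ⊗ₜ y) • z := by
  simp [trismul]

/-- `x ⊗ (y ⊗ z) ↦ t (b * (y * 𝔞 z)) • (a * x)`. -/
def triF (t : H →ₗ[S] S) (a b : H) : H ⊗[S] (H ⊗[S] H) →ₗ[S] H :=
  (TensorProduct.rid S H).toLinearMap ∘ₗ
    map (mulLeft S a)
      (t ∘ₗ mulLeft S b ∘ₗ LinearMap.mul' S H ∘ₗ lTensor H (HopfAlgebra.antipode (R := S)))

@[simp] lemma triF_tmul (t : H →ₗ[S] S) (a b x y z : H) :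
    triF t a b (x ⊗ₜ (y ⊗ₜ z)) =
      t (b * (y * HopfAlgebra.antipode (R := S) z)) • (a * x) := by
  simp [triF]

end Cosep12

namespace Cosep12
variable {S : Type*} [CommSemiring S] {H : Type*} [Semiring H] [HopfAlgebra S H]

local notation "𝔞" => HopfAlgebra.antipode (R := S)

lemma Phi_Psi_tmul (h k : H) : Phi (Psi (h ⊗ₜ[S] k)) = h ⊗ₜ[S] k := by
  set s : Repr S k (H × H) := ℛ S k with hs
  have E := sum_tmul_tmul_eq s (fun j => ℛ S (s.left j)) (fun j => ℛ S (s.right j))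
  have E3 := congrArg
    (trimap (mulLeft S h ∘ₗ LinearMap.mul' S H ∘ₗ rTensor H (HopfAlgebra.antipode (R := S)))) E
  simp only [map_sum, trimap_tmul, coe_comp, Function.comp_apply, rTensor_tmul,
    mul'_apply, mulLeft_apply] at E3
  calc Phi (Psi (h ⊗ₜ[S] k))
      = ∑ j ∈ s.index, Phi ((h * 𝔞 (s.left j)) ⊗ₜ[S] s.right j) := by
        rw [Psi_tmul h k s, map_sum]
    _ = ∑ j ∈ s.index, ∑ l ∈ (ℛ S (s.right j)).index,
          ((h * 𝔞 (s.left j)) * (ℛ S (s.right j)).left l) ⊗ₜ[S] (ℛ S (s.right j)).right l :=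
        Finset.sum_congr rfl fun j _ => Phi_tmul _ _ _
    _ = ∑ j ∈ s.index, ∑ l ∈ (ℛ S (s.right j)).index,
          (h * (𝔞 (s.left j) * (ℛ S (s.right j)).left l)) ⊗ₜ[S] (ℛ S (s.right j)).right l := by
        simp only [mul_assoc]
    _ = ∑ j ∈ s.index, ∑ l ∈ (ℛ S (s.left j)).index,
          (h * (𝔞 ((ℛ S (s.left j)).left l) * (ℛ S (s.left j)).right l)) ⊗ₜ[S] s.right j :=
        E3.symm
    _ = ∑ j ∈ s.index, (h * (counit (R := S) (s.left j) • 1)) ⊗ₜ[S] s.right j := by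
        refine Finset.sum_congr rfl fun j _ => ?_
        rw [← sum_tmul, ← Finset.mul_sum, HopfAlgebra.sum_antipode_mul_eq_smul]
    _ = h ⊗ₜ[S] k := by
        simp only [mul_smul_comm, mul_one, smul_tmul, ← tmul_sum]
        rw [sum_counit_smul_right]

end Cosep12

namespace Cosep12
variable {S : Type*} [CommSemiring S] {H : Type*} [Semiring H] [HopfAlgebra S H]

local notation "𝔞" => HopfAlgebra.antipode (R := S)

lemma Gm_Phi_tmul (t : H →ₗ[S] S) (h k : H) :
    Gm (t ∘ₗ LinearMap.mul' S H ∘ₗ lTensor H (HopfAlgebra.antipode (R := S)))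
      (Phi (h ⊗ₜ[S] k)) = t h • k := by
  set s : Repr S k (H × H) := ℛ S k with hs
  have E := sum_tmul_tmul_eq s (fun j => ℛ S (s.left j)) (fun j => ℛ S (s.right j))
  have E2 := congrArg
    (trismul (t ∘ₗ mulLeft S h ∘ₗ LinearMap.mul' S H
      ∘ₗ lTensor H (HopfAlgebra.antipode (R := S)))) E
  simp only [map_sum, trismul_tmul, coe_comp, Function.comp_apply, lTensor_tmul,
    mul'_apply, mulLeft_apply] at E2
  calc Gm (t ∘ₗ LinearMap.mul' S H ∘ₗ lTensor H (HopfAlgebra.antipode (R := S)))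
        (Phi (h ⊗ₜ[S] k))
      = ∑ j ∈ s.index, Gm (t ∘ₗ LinearMap.mul' S H
          ∘ₗ lTensor H (HopfAlgebra.antipode (R := S)))
          ((h * s.left j) ⊗ₜ[S] s.right j) := by
        rw [Phi_tmul h k s, map_sum]
    _ = ∑ j ∈ s.index, ∑ l ∈ (ℛ S (s.right j)).index,
          (t ∘ₗ LinearMap.mul' S H ∘ₗ lTensor H (HopfAlgebra.antipode (R := S)))
            ((h * s.left j) ⊗ₜ[S] (ℛ S (s.right j)).left l) • (ℛ S (s.right j)).right l :=
        Finset.sum_congr rfl fun j _ => Gm_tmul_sum _ _ _ _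
    _ = ∑ j ∈ s.index, ∑ l ∈ (ℛ S (s.right j)).index,
          t (h * (s.left j * 𝔞 ((ℛ S (s.right j)).left l))) • (ℛ S (s.right j)).right l := by
        simp only [coe_comp, Function.comp_apply, lTensor_tmul, mul'_apply, mul_assoc]
    _ = ∑ j ∈ s.index, ∑ l ∈ (ℛ S (s.left j)).index,
          t (h * ((ℛ S (s.left j)).left l * 𝔞 ((ℛ S (s.left j)).right l))) • s.right j :=
        E2.symm
    _ = ∑ j ∈ s.index, (counit (R := S) (s.left j) • t h) • s.right j := by
        refine Finset.sum_congr rfl fun j _ => ?_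
        rw [← Finset.sum_smul, ← map_sum, ← Finset.mul_sum,
          HopfAlgebra.sum_mul_antipode_eq_smul, mul_smul_comm, mul_one, map_smul]
    _ = t h • k := by
        have : ∀ j, (counit (R := S) (s.left j) • t h) • s.right j
            = t h • (counit (R := S) (s.left j) • s.right j) := fun j => by
          rw [smul_eq_mul, mul_comm, mul_smul]
        simp only [this, ← Finset.smul_sum, sum_counit_smul_right]

end Cosep12

namespace Cosep12
variable {S : Type*} [CommSemiring S] {H : Type*} [Semiring H] [HopfAlgebra S H]

local notation "𝔞" => HopfAlgebra.antipode (R := S)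

lemma Fm_apply_rep2 (δ : H ⊗[S] H →ₗ[S] S) (x y : H) {ι κ : Type*}
    (I : Finset ι) (J : Finset κ) (f g : ι → κ → H)
    (hx : comul (R := S) x = ∑ i ∈ I, ∑ l ∈ J, f i l ⊗ₜ[S] g i l) :
    Fm δ (x ⊗ₜ[S] y) = ∑ i ∈ I, ∑ l ∈ J, δ (g i l ⊗ₜ[S] y) • f i l := by
  simp only [Fm, coe_comp, Function.comp_apply, LinearEquiv.coe_coe, rTensor_tmul, hx,
    sum_tmul, map_sum, assoc_tmul, lTensor_tmul, rid_tmul]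

lemma rid_lTensor_eq_sum (t : H →ₗ[S] S) {h : H} {ι : Type*} (r : Repr S h ι) :
    (TensorProduct.rid S H) (lTensor H t (comul h)) = ∑ i ∈ r.index, t (r.right i) • r.left i := by
  rw [← r.eq]
  simp only [map_sum, lTensor_tmul, rid_tmul]

lemma Fm_Phi_tmul (t : H →ₗ[S] S)
    (ht : ∀ h : H, (TensorProduct.rid S H) (lTensor H t (comul h)) = t h • (1 : H))
    (h k : H) :
    Fm (t ∘ₗ LinearMap.mul' S H ∘ₗ lTensor H (HopfAlgebra.antipode (R := S)))
      (Phi (h ⊗ₜ[S] k)) = t h • k := by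
  set s : Repr S k (H × H) := ℛ S k with hs
  set r : Repr S h (H × H) := ℛ S h with hr
  have E := sum_tmul_tmul_eq s (fun j => ℛ S (s.left j)) (fun j => ℛ S (s.right j))
  have E1 : ∀ i : r.ι,
      ∑ j ∈ s.index, ∑ l ∈ (ℛ S (s.left j)).index,
        t (r.right i * ((ℛ S (s.left j)).right l * 𝔞 (s.right j)))
          • (r.left i * (ℛ S (s.left j)).left l) =
      ∑ j ∈ s.index, ∑ l ∈ (ℛ S (s.right j)).index,
        t (r.right i * ((ℛ S (s.right j)).left l * 𝔞 ((ℛ S (s.right j)).right l)))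
          • (r.left i * s.left j) := fun i => by
    have := congrArg (triF t (r.left i) (r.right i)) E
    simpa only [map_sum, triF_tmul] using this
  have hcm : ∀ j,
      comul (R := S) (h * s.left j) =
        ∑ i ∈ r.index, ∑ l ∈ (ℛ S (s.left j)).index,
          (r.left i * (ℛ S (s.left j)).left l) ⊗ₜ[S]
            (r.right i * (ℛ S (s.left j)).right l) := fun j => by
    rw [Bialgebra.comul_mul, ← r.eq, ← (ℛ S (s.left j)).eq, Finset.sum_mul_sum]
    simp only [Algebra.TensorProduct.tmul_mul_tmul]
  calc Fm (t ∘ₗ LinearMap.mul' S H ∘ₗ lTensor H (HopfAlgebra.antipode (R := S)))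
        (Phi (h ⊗ₜ[S] k))
      = ∑ j ∈ s.index, Fm (t ∘ₗ LinearMap.mul' S H
          ∘ₗ lTensor H (HopfAlgebra.antipode (R := S)))
            ((h * s.left j) ⊗ₜ[S] s.right j) := by
        rw [Phi_tmul h k s, map_sum]
    _ = ∑ j ∈ s.index, ∑ i ∈ r.index, ∑ l ∈ (ℛ S (s.left j)).index,
          (t ∘ₗ LinearMap.mul' S H ∘ₗ lTensor H (HopfAlgebra.antipode (R := S)))
            ((r.right i * (ℛ S (s.left j)).right l) ⊗ₜ[S] s.right j)
            • (r.left i * (ℛ S (s.left j)).left l) :=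
        Finset.sum_congr rfl fun j _ => Fm_apply_rep2 _ _ _ _ _ _ _ (hcm j)
    _ = ∑ j ∈ s.index, ∑ i ∈ r.index, ∑ l ∈ (ℛ S (s.left j)).index,
          t (r.right i * ((ℛ S (s.left j)).right l * 𝔞 (s.right j)))
            • (r.left i * (ℛ S (s.left j)).left l) := by
        simp only [coe_comp, Function.comp_apply, lTensor_tmul, mul'_apply, mul_assoc]
    _ = ∑ i ∈ r.index, ∑ j ∈ s.index, ∑ l ∈ (ℛ S (s.left j)).index,
          t (r.right i * ((ℛ S (s.left j)).right l * 𝔞 (s.right j)))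
            • (r.left i * (ℛ S (s.left j)).left l) := Finset.sum_comm
    _ = ∑ i ∈ r.index, ∑ j ∈ s.index, ∑ l ∈ (ℛ S (s.right j)).index,
          t (r.right i * ((ℛ S (s.right j)).left l * 𝔞 ((ℛ S (s.right j)).right l)))
            • (r.left i * s.left j) :=
        Finset.sum_congr rfl fun i _ => E1 i
    _ = ∑ i ∈ r.index, ∑ j ∈ s.index,
          (counit (R := S) (s.right j) • t (r.right i)) • (r.left i * s.left j) := by
        refine Finset.sum_congr rfl fun i _ => Finset.sum_congr rfl fun j _ => ?_
        rw [← Finset.sum_smul, ← map_sum, ← Finset.mul_sum,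
          HopfAlgebra.sum_mul_antipode_eq_smul, mul_smul_comm, mul_one, map_smul]
    _ = ∑ i ∈ r.index, t (r.right i) • (r.left i * k) := by
        refine Finset.sum_congr rfl fun i _ => ?_
        have : ∀ j, (counit (R := S) (s.right j) • t (r.right i)) • (r.left i * s.left j)
            = t (r.right i) • (r.left i * (counit (R := S) (s.right j) • s.left j)) :=
          fun j => by rw [smul_eq_mul, mul_comm, mul_smul, mul_smul_comm]
        simp only [this, ← Finset.smul_sum, ← Finset.mul_sum]
        rw [sum_counit_smul_left]
    _ = (∑ i ∈ r.index, t (r.right i) • r.left i) * k := by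
        simp only [← smul_mul_assoc, ← Finset.sum_mul]
    _ = t h • k := by
        rw [← rid_lTensor_eq_sum t r, ht h, smul_mul_assoc, one_mul]

end Cosep12

namespace Cosep12
variable {S : Type*} [CommSemiring S] {H : Type*} [Semiring H] [HopfAlgebra S H]

lemma Fm_eq_Gm (t : H →ₗ[S] S)
    (ht : ∀ h : H, (TensorProduct.rid S H) (lTensor H t (comul h)) = t h • (1 : H)) :
    Fm (t ∘ₗ LinearMap.mul' S H ∘ₗ lTensor H (HopfAlgebra.antipode (R := S)))
      = Gm (t ∘ₗ LinearMap.mul' S H ∘ₗ lTensor H (HopfAlgebra.antipode (R := S))) := by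
  set δ := t ∘ₗ LinearMap.mul' S H ∘ₗ lTensor H (HopfAlgebra.antipode (R := S))
  have h1 : Phi ∘ₗ Psi = (LinearMap.id : H ⊗[S] H →ₗ[S] H ⊗[S] H) :=
    TensorProduct.ext' fun h k => Phi_Psi_tmul h k
  have h2 : Fm δ ∘ₗ Phi = Gm δ ∘ₗ Phi :=
    TensorProduct.ext' fun h k => by
      simp only [coe_comp, Function.comp_apply, Fm_Phi_tmul t ht h k, Gm_Phi_tmul t h k]
      exact (Fm_Phi_tmul t ht h k).trans (Gm_Phi_tmul t h k).symm
  calc Fm δ = Fm δ ∘ₗ (Phi ∘ₗ Psi) := by rw [h1, comp_id]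
    _ = (Fm δ ∘ₗ Phi) ∘ₗ Psi := by rw [comp_assoc]
    _ = (Gm δ ∘ₗ Phi) ∘ₗ Psi := by rw [h2]
    _ = Gm δ ∘ₗ (Phi ∘ₗ Psi) := by rw [comp_assoc]
    _ = Gm δ := by rw [h1, comp_id]

end Cosep12


theorem total_left_integral_iff_coseparable
    (S : Type*) [CommSemiring S] (H : Type*) [Semiring H] [HopfAlgebra S H] :
    (∃ t : H →ₗ[S] S,
        (∀ h : H, (TensorProduct.rid S H)
            (LinearMap.lTensor H t (Coalgebra.comul h)) = t h • (1 : H)) ∧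
        t 1 = 1) ↔
      (∃ δ : H ⊗[S] H →ₗ[S] S,
        (∀ h : H, δ (Coalgebra.comul h) = Coalgebra.counit (R := S) h) ∧
        (∀ h k : H,
          -- `Σ h₁ · δ(h₂ ⊗ k)`
          (TensorProduct.rid S H)
            (LinearMap.lTensor H (δ ∘ₗ (TensorProduct.mk S H H).flip k)
              (Coalgebra.comul h)) =
          -- `Σ δ(h ⊗ k₁) · k₂`
          (TensorProduct.lid S H)
            (LinearMap.rTensor H (δ ∘ₗ TensorProduct.mk S H H h)
              (Coalgebra.comul k)))) := by
  constructor
  · rintro ⟨t, ht, ht1⟩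
    refine ⟨t ∘ₗ LinearMap.mul' S H ∘ₗ LinearMap.lTensor H (HopfAlgebra.antipode (R := S)),
      fun h => ?_, fun h k => ?_⟩
    · rw [LinearMap.comp_apply, LinearMap.comp_apply,
        HopfAlgebra.mul_antipode_lTensor_comul_apply, Algebra.algebraMap_eq_smul_one,
        map_smul, ht1, smul_eq_mul, mul_one]
    · rw [← Cosep12.Fm_tmul, ← Cosep12.Gm_tmul, Cosep12.Fm_eq_Gm t ht]
  · rintro ⟨δ, hδ1, hδ2⟩
    refine ⟨δ ∘ₗ (TensorProduct.mk S H H).flip 1, fun h => ?_, ?_⟩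
    · rw [hδ2 h 1]
      have h1 : Coalgebra.comul (R := S) (1 : H) = (1 : H) ⊗ₜ[S] 1 := by
        rw [Bialgebra.comul_one]; rfl
      simp [h1]
    · have h1 : ((TensorProduct.mk S H H).flip 1) (1 : H) = Coalgebra.comul (R := S) (1 : H) := by
        rw [Bialgebra.comul_one]; rfl
      rw [LinearMap.comp_apply, h1, hδ1, Bialgebra.counit_one]
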